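/- Let p ≥ 1, let P(y) = y^p + Σ_{0≤h≤p−1} c_h·y^h ∈ ℝ[y] be monic of degree p, let 0 ≤ q ≤ p−1 and let t₁, t₂ ∈ ℝ. For i = 1,2 define η_i : {0,…,p} → {−1,0,1} by η_i(k) = sign(P^{(k)}(t_i)) for 0 ≤ k ≤ p−1 and η_i(p) = 1. Suppose η₁(q) ≠ η₂(q), suppose η₁(k) = η₂(k) ≠ 0 for all q+1 ≤ k ≤ p−1, and suppose that either η₁(q) < η₂(q) and η₁(q+1) = 1, or η₁(q) > η₂(q) and η₁(q+1) = −1. Then t₁ < t₂. -/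
import Mathlib


open Polynomial

private lemma sign_le_sign_of_le {a b : ℝ} (h : a ≤ b) :
    SignType.sign a ≤ SignType.sign b := by
  rcases lt_trichotomy b 0 with hb | hb | hb
  · rw [sign_neg hb, sign_neg (h.trans_lt hb)]
  · subst hb
    rw [sign_zero]
    rcases lt_or_eq_of_le h with ha | ha
    · rw [sign_neg ha]; decide
    · rw [ha, sign_zero]
  · rw [sign_pos hb]
    rcases lt_trichotomy a 0 with ha | ha | ha
    · rw [sign_neg ha]; decide
    · rw [ha, sign_zero]; decide
    · rw [sign_pos ha]

private lemma signtype_tri (s : SignType) : s = -1 ∨ s = 0 ∨ s = 1 := by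
  cases s with
  | zero => exact Or.inr (Or.inl rfl)
  | neg => exact Or.inl SignType.neg_eq_neg_one
  | pos => exact Or.inr (Or.inr SignType.pos_eq_one)

/-- Semantic content of Proposition `thWITL_lower`: let `P` be monic of degree
`p ≥ 1` and let `η₁, η₂` be the extended Thom encodings of `t₁, t₂`
(with `η_i k = sign (P^{(k)}(t_i))` for `k ≤ p-1` and `η_i p = 1`). If
`η₁ q ≠ η₂ q`, `η₁ k = η₂ k ≠ 0` for all `q+1 ≤ k ≤ p-1`, and either
`η₁ q < η₂ q` with `η₁ (q+1) = 1`, or `η₁ q > η₂ q` with `η₁ (q+1) = -1`,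
then `t₁ < t₂`. -/
theorem thom_encoding_lt (p : ℕ) (hp : 1 ≤ p) (P : Polynomial ℝ)
    (hmon : P.Monic) (hdeg : P.natDegree = p)
    (q : ℕ) (hq : q ≤ p - 1) (t₁ t₂ : ℝ)
    (η₁ η₂ : ℕ → SignType)
    (hη₁ : ∀ k ≤ p, η₁ k =
      if k = p then 1
      else SignType.sign ((Polynomial.derivative^[k] P).eval t₁))
    (hη₂ : ∀ k ≤ p, η₂ k =
      if k = p then 1
      else SignType.sign ((Polynomial.derivative^[k] P).eval t₂))
    (hne : η₁ q ≠ η₂ q)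
    (hsame : ∀ k, q + 1 ≤ k → k ≤ p - 1 → η₁ k = η₂ k ∧ η₁ k ≠ 0)
    (hcase : (η₁ q < η₂ q ∧ η₁ (q + 1) = 1) ∨ (η₂ q < η₁ q ∧ η₁ (q + 1) = -1)) :
    t₁ < t₂ := by
  have hqp : q < p := by omega
  -- top derivative is the positive constant p!
  have htop : ∀ x : ℝ, (derivative^[p] P).eval x = (p.factorial : ℝ) := by
    intro x
    have hdegle : (derivative^[p] P).natDegree ≤ 0 := by
      have := P.natDegree_iterate_derivative p
      omega
    rw [Polynomial.eq_C_of_natDegree_le_zero hdegle, eval_C,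
      coeff_iterate_derivative, Nat.zero_add, Nat.descFactorial_self]
    have : P.coeff p = 1 := by
      rw [← hdeg]; exact hmon
    rw [this]; simp
  by_contra hlt
  push_neg at hlt
  rcases eq_or_lt_of_le hlt with heq | hlt2
  · apply hne
    rw [hη₁ q hqp.le, hη₂ q hqp.le, heq]
  -- now t₂ < t₁; derive contradiction
  -- constant sign of higher derivatives on [t₂, t₁]
  have key : ∀ j k, k + j = p → q + 1 ≤ k →
      ∀ x ∈ Set.Icc t₂ t₁, SignType.sign ((derivative^[k] P).eval x) = η₁ k := by
    intro j
    induction j with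
    | zero =>
      intro k hk _ x _
      have hkp : k = p := by omega
      rw [hkp, htop x, hη₁ p le_rfl, if_pos rfl]
      exact sign_pos (by positivity)
    | succ j ih =>
      intro k hk hqk x hx
      have hkp : k < p := by omega
      have ih' := ih (k + 1) (by omega) (by omega)
      -- sign of (k+1)-th derivative is η₁ (k+1) ≠ 0 on the interval
      have hs1 : η₁ (k + 1) ≠ 0 := by
        rcases eq_or_lt_of_le (show k + 1 ≤ p by omega) with h | h
        · rw [hη₁ (k+1) h.le, if_pos h]; decide
        · exact (hsame (k+1) (by omega) (by omega)).2
      have hcont : ContinuousOn (fun x => (derivative^[k] P).eval x) (Set.Icc t₂ t₁) :=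
        (Polynomial.continuous _).continuousOn
      have hderiv : ∀ y, deriv (fun x => (derivative^[k] P).eval x) y
          = (derivative^[k+1] P).eval y := by
        intro y
        rw [Polynomial.deriv, Function.iterate_succ_apply']
      -- endpoint signs
      have hη₁k : η₁ k = SignType.sign ((derivative^[k] P).eval t₁) := by
        rw [hη₁ k hkp.le, if_neg (by omega)]
      have hη₂k : η₂ k = SignType.sign ((derivative^[k] P).eval t₂) := by
        rw [hη₂ k hkp.le, if_neg (by omega)]
      obtain ⟨hsame_k, hne_k⟩ := hsame k hqk (by omega)
      have ht₁ : t₁ ∈ Set.Icc t₂ t₁ := ⟨hlt2.le, le_rfl⟩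
      have ht₂ : t₂ ∈ Set.Icc t₂ t₁ := ⟨le_rfl, hlt2.le⟩
      rcases signtype_tri (η₁ (k+1)) with h1 | h1 | h1
      · -- (k+1)-th derivative negative: k-th strictly antitone
        have hneg : ∀ y ∈ Set.Icc t₂ t₁, (derivative^[k+1] P).eval y < 0 := by
          intro y hy
          have := ih' y hy
          rw [h1] at this
          exact sign_eq_neg_one_iff.mp this
        have hanti : StrictAntiOn (fun x => (derivative^[k] P).eval x) (Set.Icc t₂ t₁) := by
          apply strictAntiOn_of_deriv_neg (convex_Icc _ _) hcont
          intro y hy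
          rw [hderiv]
          exact hneg y (interior_subset hy)
        -- endpoints: eval t₁ ≤ eval x ≤ eval t₂
        have hmono := hanti.antitoneOn
        have hle1 : (derivative^[k] P).eval x ≤ (derivative^[k] P).eval t₂ :=
          hmono ht₂ hx hx.1
        have hle2 : (derivative^[k] P).eval t₁ ≤ (derivative^[k] P).eval x :=
          hmono hx ht₁ hx.2
        rcases signtype_tri (η₁ k) with h2 | h2 | h2
        · have : (derivative^[k] P).eval t₂ < 0 :=
            sign_eq_neg_one_iff.mp (by rw [← hη₂k, ← hsame_k, h2])
          rw [h2]; exact sign_neg (lt_of_le_of_lt hle1 this)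
        · exact absurd h2 hne_k
        · have : 0 < (derivative^[k] P).eval t₁ :=
            sign_eq_one_iff.mp (by rw [← hη₁k, h2])
          rw [h2]; exact sign_pos (lt_of_lt_of_le this hle2)
      · exact absurd h1 hs1
      · -- (k+1)-th derivative positive: k-th strictly monotone
        have hpos : ∀ y ∈ Set.Icc t₂ t₁, 0 < (derivative^[k+1] P).eval y := by
          intro y hy
          have := ih' y hy
          rw [h1] at this
          exact sign_eq_one_iff.mp this
        have hmonos : StrictMonoOn (fun x => (derivative^[k] P).eval x) (Set.Icc t₂ t₁) := by
          apply strictMonoOn_of_deriv_pos (convex_Icc _ _) hcont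
          intro y hy
          rw [hderiv]
          exact hpos y (interior_subset hy)
        have hmono := hmonos.monotoneOn
        have hle1 : (derivative^[k] P).eval t₂ ≤ (derivative^[k] P).eval x :=
          hmono ht₂ hx hx.1
        have hle2 : (derivative^[k] P).eval x ≤ (derivative^[k] P).eval t₁ :=
          hmono hx ht₁ hx.2
        rcases signtype_tri (η₁ k) with h2 | h2 | h2
        · have : (derivative^[k] P).eval t₁ < 0 :=
            sign_eq_neg_one_iff.mp (by rw [← hη₁k, h2])
          rw [h2]; exact sign_neg (lt_of_le_of_lt hle2 this)
        · exact absurd h2 hne_k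
        · have : 0 < (derivative^[k] P).eval t₂ :=
            sign_eq_one_iff.mp (by rw [← hη₂k, ← hsame_k, h2])
          rw [h2]; exact sign_pos (lt_of_lt_of_le this hle1)
  -- apply key at k = q+1
  have keyq := key (p - (q+1)) (q+1) (by omega) le_rfl
  have hcont : ContinuousOn (fun x => (derivative^[q] P).eval x) (Set.Icc t₂ t₁) :=
    (Polynomial.continuous _).continuousOn
  have hderiv : ∀ y, deriv (fun x => (derivative^[q] P).eval x) y
      = (derivative^[q+1] P).eval y := by
    intro y
    rw [Polynomial.deriv, Function.iterate_succ_apply']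
  have hη₁q : η₁ q = SignType.sign ((derivative^[q] P).eval t₁) := by
    rw [hη₁ q hqp.le, if_neg (by omega)]
  have hη₂q : η₂ q = SignType.sign ((derivative^[q] P).eval t₂) := by
    rw [hη₂ q hqp.le, if_neg (by omega)]
  have ht₁ : t₁ ∈ Set.Icc t₂ t₁ := ⟨hlt2.le, le_rfl⟩
  have ht₂ : t₂ ∈ Set.Icc t₂ t₁ := ⟨le_rfl, hlt2.le⟩
  rcases hcase with ⟨hlt_q, hsign⟩ | ⟨hlt_q, hsign⟩
  · -- η₁ (q+1) = 1 : q-th derivative strictly increasing, so eval t₂ < eval t₁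
    have hpos : ∀ y ∈ Set.Icc t₂ t₁, 0 < (derivative^[q+1] P).eval y := by
      intro y hy
      have := keyq y hy
      rw [hsign] at this
      exact sign_eq_one_iff.mp this
    have hmonos : StrictMonoOn (fun x => (derivative^[q] P).eval x) (Set.Icc t₂ t₁) := by
      apply strictMonoOn_of_deriv_pos (convex_Icc _ _) hcont
      intro y hy
      rw [hderiv]
      exact hpos y (interior_subset hy)
    have := hmonos ht₂ ht₁ hlt2
    have hsle : η₂ q ≤ η₁ q := by
      rw [hη₁q, hη₂q]
      exact sign_le_sign_of_le this.le
    exact absurd hsle (not_le.mpr hlt_q)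
  · -- η₁ (q+1) = -1 : q-th derivative strictly decreasing, so eval t₁ < eval t₂
    have hneg : ∀ y ∈ Set.Icc t₂ t₁, (derivative^[q+1] P).eval y < 0 := by
      intro y hy
      have := keyq y hy
      rw [hsign] at this
      exact sign_eq_neg_one_iff.mp this
    have hanti : StrictAntiOn (fun x => (derivative^[q] P).eval x) (Set.Icc t₂ t₁) := by
      apply strictAntiOn_of_deriv_neg (convex_Icc _ _) hcont
      intro y hy
      rw [hderiv]
      exact hneg y (interior_subset hy)
    have := hanti ht₂ ht₁ hlt2
    have hsle : η₁ q ≤ η₂ q := by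
      rw [hη₁q, hη₂q]
      exact sign_le_sign_of_le this.le
    exact absurd hsle (not_le.mpr hlt_q)
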